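/- For every g in SU(2), there exist X, Y in SU(2) such that the commutator X^{-1} Y^{-1} X Y equals g. That is, every element of SU(2) is a commutator. -/

import Mathlib

open Complex Matrix ComplexConjugate


/-- The special unitary group `SU(2)` as a subgroup of the `2 × 2` unitary group. -/
def SU2 : Subgroup (Matrix.unitaryGroup (Fin 2) ℂ) where
  carrier := {A | (A : Matrix (Fin 2) (Fin 2) ℂ).det = 1}
  one_mem' := by simp
  mul_mem' := by
    intro A B hA hB
    simp only [Set.mem_setOf_eq] at *
    rw [Matrix.UnitaryGroup.mul_val, Matrix.det_mul, hA, hB, one_mul]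
  inv_mem' := by
    intro A hA
    simp only [Set.mem_setOf_eq] at *
    rw [Matrix.UnitaryGroup.inv_val]
    simp [Matrix.det_conjTranspose, star, hA]
    rfl

/-- The underlying `2 × 2` complex matrix of an element of `SU(2)`. -/
def SU2.mat (A : SU2) : Matrix (Fin 2) (Fin 2) ℂ := A.val.val

namespace SU2

lemma ext' {A B : SU2} (h : mat A = mat B) : A = B :=
  Subtype.ext (Subtype.ext h)

lemma mat_mul (A B : SU2) : mat (A * B) = mat A * mat B := rfl

lemma mat_one : mat (1 : SU2) = 1 := rfl

def mk (a b : ℂ) (h : a * conj a + b * conj b = 1) : SU2 :=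
  ⟨⟨!![a, b; -conj b, conj a], by
      rw [Matrix.mem_unitaryGroup_iff]
      have hstar : star !![a, b; -conj b, conj a] = !![conj a, -b; conj b, a] := by
        ext i j
        fin_cases i <;> fin_cases j <;>
          simp [Matrix.star_apply, Complex.star_def]
      rw [hstar, Matrix.mul_fin_two, Matrix.one_fin_two]
      ext i j
      fin_cases i <;> fin_cases j <;> simp [Complex.star_def] <;> first | linear_combination h | linear_combination -h | linear_combination 2*h | linear_combination -2*h | ring⟩, by
      show Matrix.det _ = 1
      rw [Matrix.det_fin_two_of]
      linear_combination h⟩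

lemma mat_mk (a b : ℂ) (h : a * conj a + b * conj b = 1) :
    mat (mk a b h) = !![a, b; -conj b, conj a] := by unfold mat mk; rfl

end SU2

namespace SU2

lemma mul_cond {a b c d : ℂ} (h1 : a * conj a + b * conj b = 1)
    (h2 : c * conj c + d * conj d = 1) :
    (a * c - b * conj d) * conj (a * c - b * conj d) +
      (a * d + b * conj c) * conj (a * d + b * conj c) = 1 := by
  simp only [_root_.map_mul, map_sub, map_add, Complex.conj_conj]
  linear_combination (c * conj c + d * conj d) * h1 + h2

lemma mk_mul {a b c d : ℂ} (h1 : a * conj a + b * conj b = 1)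
    (h2 : c * conj c + d * conj d = 1) :
    mk a b h1 * mk c d h2 = mk (a * c - b * conj d) (a * d + b * conj c) (mul_cond h1 h2) := by
  apply ext'
  rw [mat_mul, mat_mk, mat_mk, mat_mk, Matrix.mul_fin_two]
  ext i j
  fin_cases i <;> fin_cases j <;>
    simp [_root_.map_mul, map_sub, map_add, map_neg, Complex.conj_conj] <;> ring

lemma mk_eq_mk {a b c d : ℂ} (h1 : a * conj a + b * conj b = 1)
    (h2 : c * conj c + d * conj d = 1) (hac : a = c) (hbd : b = d) :
    mk a b h1 = mk c d h2 := by
  apply ext'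
  rw [mat_mk, mat_mk, hac, hbd]

lemma mk_one (h : (1 : ℂ) * conj 1 + 0 * conj 0 = 1) : mk 1 0 h = 1 := by
  apply ext'
  rw [mat_mk, mat_one, Matrix.one_fin_two]
  norm_num

lemma exists_mk (g : SU2) : ∃ a b h, g = mk a b h := by
  have hu : mat g * star (mat g) = 1 := (Matrix.mem_unitaryGroup_iff).mp g.val.2
  have hdet : (mat g).det = 1 := g.2
  set a := mat g 0 0
  set b := mat g 0 1
  set c := mat g 1 0
  set d := mat g 1 1
  have h00 : a * conj a + b * conj b = 1 := by
    have := congrFun (congrFun hu 0) 0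
    simpa [Matrix.mul_apply, Fin.sum_univ_two, Matrix.star_apply, Complex.star_def,
      Matrix.one_apply] using this
  have h01 : a * conj c + b * conj d = 0 := by
    have := congrFun (congrFun hu 0) 1
    simpa [Matrix.mul_apply, Fin.sum_univ_two, Matrix.star_apply, Complex.star_def,
      Matrix.one_apply] using this
  have h01' : conj a * c + conj b * d = 0 := by
    have := congrArg conj h01
    simpa [map_add, _root_.map_mul, Complex.conj_conj] using this
  have hdet2 : a * d - b * c = 1 := by
    rw [Matrix.det_fin_two] at hdet
    exact hdet
  have hd : d = conj a := by
    linear_combination conj a * hdet2 + b * h01' - d * h00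
  have hc : c = -conj b := by
    linear_combination a * h01' - conj b * hdet2 - c * h00
  refine ⟨a, b, h00, ?_⟩
  apply ext'
  rw [mat_mk]
  ext i j
  fin_cases i <;> fin_cases j <;> simp [← hd, ← hc] <;> rfl

lemma comm_helper {G : Type*} [Group G] (g P J D L : G)
    (h4 : J * D⁻¹ = D * J) (h5 : D * D = L) (h6 : g * P = P * L) :
    ∃ X Y : G, X⁻¹ * Y⁻¹ * X * Y = g := by
  refine ⟨P * J⁻¹ * P⁻¹, P * D * P⁻¹, ?_⟩
  have hg : g = P * L * P⁻¹ := by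
    rw [← h6]; group
  have key : J * D⁻¹ * J⁻¹ * D = D * D := by rw [h4]; group
  rw [hg, ← h5, ← key]
  group

end SU2

set_option maxHeartbeats 1000000 in
open SU2 in
theorem su2_commutator_surjective (g : SU2) :
    ∃ X Y : SU2, X⁻¹ * Y⁻¹ * X * Y = g := by
  obtain ⟨a, b, hab, rfl⟩ := SU2.exists_mk g
  set r : ℝ := a.re with hr
  set t : ℝ := a.im with htdef
  have ha : (r : ℂ) + (t : ℂ) * I = a := Complex.re_add_im a
  have hnb : Complex.normSq a + Complex.normSq b = 1 := by
    have h := hab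
    rw [Complex.mul_conj, Complex.mul_conj] at h
    exact_mod_cast h
  have hna : Complex.normSq a = r^2 + t^2 := by rw [Complex.normSq_apply]; ring
  have hr1 : r^2 + t^2 ≤ 1 := by nlinarith [Complex.normSq_nonneg b]
  have hr1' : r^2 ≤ 1 := by nlinarith
  set s : ℝ := Real.sqrt (1 - r^2) with hsdef
  have hs0 : 0 ≤ s := Real.sqrt_nonneg _
  have hs2 : s^2 = 1 - r^2 := Real.sq_sqrt (by nlinarith)
  set p : ℝ := Real.sqrt ((1+r)/2) with hpdef
  set q : ℝ := Real.sqrt ((1-r)/2) with hqdef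
  have hp2 : p^2 = (1+r)/2 := Real.sq_sqrt (by nlinarith)
  have hq2 : q^2 = (1-r)/2 := Real.sq_sqrt (by nlinarith)
  have hpq : 2*p*q = s := by
    have h5 : 0 ≤ 2*p*q := by positivity
    calc 2*p*q = Real.sqrt ((2*p*q)^2) := (Real.sqrt_sq h5).symm
    _ = s := by rw [show (2*p*q)^2 = 1 - r^2 from by
          linear_combination (4*q^2) * hp2 + (2*(1+r)) * hq2]
  -- complex casts
  have cpqr : (p:ℂ)^2 - (q:ℂ)^2 = (r:ℂ) := by
    have : p^2 - q^2 = r := by rw [hp2, hq2]; ring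
    exact_mod_cast this
  have cpq1 : (p:ℂ)^2 + (q:ℂ)^2 = 1 := by
    have : p^2 + q^2 = 1 := by rw [hp2, hq2]; ring
    exact_mod_cast this
  have cpq : 2*(p:ℂ)*(q:ℂ) = (s:ℂ) := by exact_mod_cast hpq
  have crs : (r:ℂ)^2 + (s:ℂ)^2 = 1 := by
    have : r^2 + s^2 = 1 := by rw [hs2]; ring
    exact_mod_cast this
  set u : ℂ := (p:ℂ) + (q:ℂ)*I with hudef
  set lam : ℂ := (r:ℂ) + (s:ℂ)*I with hlamdef
  have hcu : conj u = (p:ℂ) - (q:ℂ)*I := by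
    rw [hudef]
    simp [map_add, _root_.map_mul, Complex.conj_ofReal, Complex.conj_I]
    ring
  have hclam : conj lam = (r:ℂ) - (s:ℂ)*I := by
    rw [hlamdef]
    simp [map_add, _root_.map_mul, Complex.conj_ofReal, Complex.conj_I]
    ring
  have hu : u * conj u + 0 * conj 0 = 1 := by
    rw [hcu, hudef]
    linear_combination cpq1 - (q:ℂ)^2 * Complex.I_sq
  have hu' : conj u * conj (conj u) + 0 * conj 0 = 1 := by
    rw [Complex.conj_conj, hcu, hudef]
    linear_combination cpq1 - (q:ℂ)^2 * Complex.I_sq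
  have hlam : lam * conj lam + 0 * conj 0 = 1 := by
    rw [hclam, hlamdef]
    linear_combination crs - (s:ℂ)^2 * Complex.I_sq
  have hJc : (0:ℂ) * conj 0 + 1 * conj 1 = 1 := by simp
  have h1c : (1:ℂ) * conj 1 + 0 * conj 0 = 1 := by simp
  set J : SU2 := mk 0 1 hJc with hJdef
  set Du : SU2 := mk u 0 hu with hDudef
  set Du' : SU2 := mk (conj u) 0 hu' with hDu'def
  set Dlam : SU2 := mk lam 0 hlam with hDlamdef
  have h2 : Du * Du' = 1 := by
    rw [hDudef, hDu'def, mk_mul, ← mk_one h1c]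
    exact mk_eq_mk _ _ (by linear_combination hu) (by ring)
  have h4 : J * Du⁻¹ = Du * J := by
    have hinv : Du⁻¹ = Du' := (inv_eq_of_mul_eq_one_right h2)
    rw [hinv, hJdef, hDudef, hDu'def, mk_mul, mk_mul]
    exact mk_eq_mk _ _ (by simp) (by simp)
  have h5 : Du * Du = Dlam := by
    rw [hDudef, hDlamdef, mk_mul]
    refine mk_eq_mk _ _ ?_ (by simp)
    rw [hudef, hlamdef]
    simp only [map_zero, mul_zero, sub_zero]
    linear_combination cpqr + Complex.I * cpq + (q:ℂ)^2 * Complex.I_sq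
  -- construct P with g * P = P * Dlam
  suffices hPex : ∃ P : SU2, mk a b hab * P = P * Dlam by
    obtain ⟨P, h6⟩ := hPex
    exact comm_helper _ P J Du Dlam h4 h5 h6
  by_cases hbs : b = 0 ∧ t = s
  · refine ⟨1, ?_⟩
    rw [mul_one, one_mul]
    rw [hDlamdef]
    refine mk_eq_mk _ _ ?_ hbs.1
    rw [← ha, hbs.2, hlamdef]
  · -- nondegenerate case
    set m : ℝ := Real.sqrt (Complex.normSq b + (s-t)^2) with hmdef
    have hmpos : 0 < m := by
      rw [hmdef]
      apply Real.sqrt_pos.mpr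
      rcases (not_and_or.mp hbs) with hb | hts
      · have := Complex.normSq_pos.mpr hb
        nlinarith [sq_nonneg (s-t)]
      · have h7 : (0:ℝ) < (s-t)^2 := by
          have hne : s - t ≠ 0 := sub_ne_zero.mpr (fun h => hts h.symm)
          exact pow_two_pos_of_ne_zero hne
        nlinarith [Complex.normSq_nonneg b]
    have hM : ((m:ℂ)) ≠ 0 := by exact_mod_cast hmpos.ne'
    have cm2 : ((m:ℂ))^2 = (Complex.normSq b : ℂ) + ((s:ℂ)-(t:ℂ))^2 := by
      have : m^2 = Complex.normSq b + (s-t)^2 := Real.sq_sqrt (by nlinarith [Complex.normSq_nonneg b, sq_nonneg (s-t)])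
      exact_mod_cast this
    have cb : b * conj b = ((Complex.normSq b : ℝ) : ℂ) := Complex.mul_conj b
    have hca : conj a = (r:ℂ) - (t:ℂ)*I := by
      rw [← ha]
      simp [map_add, _root_.map_mul, Complex.conj_ofReal, Complex.conj_I]
      ring
    have hPc : (b/(m:ℂ)) * conj (b/(m:ℂ)) + ((((s:ℂ)-(t:ℂ))*I)/(m:ℂ)) * conj ((((s:ℂ)-(t:ℂ))*I)/(m:ℂ)) = 1 := by
      simp only [map_div₀, _root_.map_mul, map_sub, Complex.conj_ofReal, Complex.conj_I]
      field_simp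
      linear_combination cb - cm2 - (((s:ℂ)-(t:ℂ))^2) * Complex.I_sq
    refine ⟨mk (b/(m:ℂ)) ((((s:ℂ)-(t:ℂ))*I)/(m:ℂ)) hPc, ?_⟩
    rw [hDlamdef, mk_mul, mk_mul]
    refine mk_eq_mk _ _ ?_ ?_
    · simp only [map_div₀, _root_.map_mul, map_sub, map_zero, Complex.conj_ofReal, Complex.conj_I, mul_zero, sub_zero]
      field_simp
      rw [hlamdef]
      linear_combination (-b) * ha
    · simp only [map_div₀, _root_.map_mul, map_sub, map_zero, Complex.conj_ofReal, Complex.conj_I, mul_zero, zero_add, mul_zero]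
      field_simp
      rw [hlamdef, hclam]
      linear_combination hab - a * hca + ((r:ℂ) - (s:ℂ)*I) * ha - crs + (s:ℂ)^2 * Complex.I_sq
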